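/- (Lemma 1, simplicity of roots) For every integer r ≥ 1, every i ≥ 0 and every j with 1 ≤ j ≤ r+1, the polynomial Z_{(r+1)i+j} has exactly i+1 real roots, all of which are negative and pairwise distinct (i.e., all roots of Z_{(r+1)i+j} are simple). -/

import Mathlib

open Polynomial

/-- The partition function of the 1d classical Rydberg blockade chain with `n` sites and
blockade radius `r`:  `Z_n(y) = Σ_{m=0}^{⌊(n+r)/(r+1)⌋} C(n - r(m-1), m) y^m`. -/
noncomputable def Z (r n : ℕ) : Polynomial ℝ :=
  ∑ m ∈ Finset.range ((n + r) / (r + 1) + 1),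
    Polynomial.C ((Nat.choose (n - r * (m - 1)) m : ℝ)) * Polynomial.X ^ m


/-- degree bound -/
def DD (r n : ℕ) : ℕ := (n + r) / (r + 1)

/-- nicer coefficient -/
def cc (r n m : ℕ) : ℕ := Nat.choose (n + r - r * m) m

lemma lt_succ_mul (r n : ℕ) : n + r < (r+1) * (DD r n + 1) := by
  have h := Nat.div_add_mod (n + r) (r + 1)
  have h2 : (n + r) % (r + 1) < r + 1 := Nat.mod_lt _ (by omega)
  unfold DD
  have h3 : (r+1) * ((n + r) / (r + 1) + 1) = (r+1) * ((n + r) / (r + 1)) + (r+1) := by ring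
  omega

lemma le_mul (r n : ℕ) : (r+1) * DD r n ≤ n + r := by
  have := Nat.div_mul_le_self (n + r) (r + 1)
  unfold DD
  rw [Nat.mul_comm]
  exact this


lemma cc_eq_zero (r n m : ℕ) (h : DD r n < m) : cc r n m = 0 := by
  have h1 := lt_succ_mul r n
  have h2 : (r+1) * (DD r n + 1) ≤ (r+1) * m := Nat.mul_le_mul_left _ (by omega)
  apply Nat.choose_eq_zero_of_lt
  have : (r+1) * m = r * m + m := by ring
  omega

lemma coeff_Z (r n k : ℕ) : (Z r n).coeff k = (cc r n k : ℝ) := by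
  unfold Z
  rw [Polynomial.finset_sum_coeff]
  simp only [Polynomial.coeff_C_mul, Polynomial.coeff_X_pow, mul_ite, mul_one, mul_zero]
  rw [show ((n + r) / (r + 1) + 1) = DD r n + 1 from rfl,
    Finset.sum_ite_eq (Finset.range (DD r n + 1)) k
    (fun m => ((Nat.choose (n - r * (m - 1)) m : ℝ)))]
  by_cases hk : k ∈ Finset.range (DD r n + 1)
  · rw [if_pos hk]
    norm_cast
    rcases Nat.eq_zero_or_pos k with rfl | hk1
    · simp [cc]
    · unfold cc
      have hrk : r * k = r * (k - 1) + r := by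
        have hk' : k - 1 + 1 = k := by omega
        nth_rewrite 1 [← hk']; ring
      rcases le_or_gt (r * (k-1)) n with h | h
      · congr 1; omega
      · have h1 : n - r * (k-1) = 0 := by omega
        have h2 : n + r - r * k = 0 := by omega
        rw [h1, h2]
  · rw [if_neg hk]
    have : DD r n < k := by simpa [Finset.mem_range, Nat.lt_succ_iff, not_le] using hk
    rw [cc_eq_zero r n k this]; simp

lemma cc_D_pos (r n : ℕ) : 0 < cc r n (DD r n) := by
  apply Nat.choose_pos
  have h1 := le_mul r n
  have h2 : (r+1) * DD r n = r * DD r n + DD r n := by ring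
  omega

lemma natDegree_Z (r n : ℕ) : (Z r n).natDegree = DD r n := by
  apply le_antisymm
  · rw [Polynomial.natDegree_le_iff_coeff_eq_zero]
    intro m hm
    rw [coeff_Z, cc_eq_zero r n m hm, Nat.cast_zero]
  · apply Polynomial.le_natDegree_of_ne_zero
    rw [coeff_Z]
    exact_mod_cast (cc_D_pos r n).ne'

lemma leadingCoeff_Z_pos (r n : ℕ) : 0 < (Z r n).leadingCoeff := by
  rw [Polynomial.leadingCoeff, natDegree_Z, coeff_Z]
  exact_mod_cast cc_D_pos r n

lemma Z_ne_zero (r n : ℕ) : Z r n ≠ 0 := by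
  intro h
  have := coeff_Z r n 0
  rw [h] at this
  simp [cc] at this

lemma Z_eval_zero (r n : ℕ) : (Z r n).eval 0 = 1 := by
  rw [← Polynomial.coeff_zero_eq_eval_zero, coeff_Z]
  simp [cc]

lemma Zrec (r n : ℕ) : Z r (n + (r+1)) = Z r (n + r) + X * Z r n := by
  ext k
  rw [coeff_Z, Polynomial.coeff_add, coeff_Z]
  rcases Nat.eq_zero_or_pos k with rfl | hk
  · simp [cc]
  · obtain ⟨k, rfl⟩ := Nat.exists_eq_add_of_le hk
    rw [add_comm 1 k, Polynomial.coeff_X_mul, coeff_Z]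
    unfold cc
    have h1 : n + (r+1) + r - r * (k+1) = (n + 2*r + 1) - (r*k + r) := by
      congr 1 <;> ring
    have h2 : n + r + r - r * (k+1) = (n + 2*r) - (r*k + r) := by
      congr 1 <;> ring
    have h3 : n + r - r * k = (n + 2*r) - (r*k + r) := by omega
    rw [h1, h2, h3]
    rcases le_or_gt (r*k + r) (n + 2*r) with h | h
    · obtain ⟨s, hs⟩ := Nat.exists_eq_add_of_le h
      have h4 : n + 2*r + 1 - (r*k+r) = s + 1 := by omega
      have h5 : n + 2*r - (r*k+r) = s := by omega
      rw [h4, h5]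
      push_cast [Nat.choose_succ_succ]
      ring
    · have h4 : n + 2*r + 1 - (r*k+r) = 0 ∨ n + 2*r + 1 - (r*k+r) = 1 ∧ k ≥ 1 ∨ k = 0 := by omega
      have hk0 : k = 0 → False := by intro h0; subst h0; simp at h; omega
      have h5 : n + 2*r - (r*k+r) = 0 := by omega
      rw [h5]
      have hk1 : 1 ≤ k := by
        rcases Nat.eq_zero_or_pos k with rfl | h1
        · exact absurd rfl hk0
        · exact h1
      rcases h4 with h4 | ⟨h4, _⟩ | h4
      · rw [h4, Nat.choose_eq_zero_of_lt (show (0:ℕ) < k + 1 by omega),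
          Nat.choose_eq_zero_of_lt (show (0:ℕ) < k by omega)]
        simp
      · rw [h4, Nat.choose_eq_zero_of_lt (show (1:ℕ) < k + 1 by omega),
          Nat.choose_eq_zero_of_lt (show (0:ℕ) < k + 1 by omega),
          Nat.choose_eq_zero_of_lt (show (0:ℕ) < k by omega)]
        simp
      · exact absurd h4 hk0

lemma DD_small (r n : ℕ) (h1 : 1 ≤ n) (h2 : n ≤ r + 1) : DD r n = 1 := by
  unfold DD
  rw [Nat.div_eq_of_lt_le] <;> omega

lemma DD_pos (r n : ℕ) (h1 : 1 ≤ n) : 1 ≤ DD r n := by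
  unfold DD
  rw [Nat.le_div_iff_mul_le (by omega)]
  omega

lemma DD_mono (r : ℕ) {a b : ℕ} (h : a ≤ b) : DD r a ≤ DD r b :=
  Nat.div_le_div_right (by omega)

lemma DD_shift (r n : ℕ) : DD r (n + (r+1)) = DD r n + 1 := by
  unfold DD
  rw [show n + (r+1) + r = n + r + (r+1) by ring, Nat.add_div_right _ (by omega)]

lemma Zsmall (r n : ℕ) (h1 : 1 ≤ n) (h2 : n ≤ r + 1) : Z r n = C (n:ℝ) * X + 1 := by
  ext k
  rw [coeff_Z]
  match k with
  | 0 => simp [cc]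
  | 1 =>
    rw [show cc r n 1 = n by
      unfold cc; rw [show n + r - r*1 = n by omega, Nat.choose_one_right]]
    simp [Polynomial.coeff_one]
  | (k+2) =>
    have : DD r n < k + 2 := by rw [DD_small r n h1 h2]; omega
    rw [cc_eq_zero r n _ this]
    simp only [Polynomial.coeff_add, Polynomial.coeff_C_mul, Polynomial.coeff_X,
      Polynomial.coeff_one]
    norm_num

lemma Zsmall_roots (r n : ℕ) (h1 : 1 ≤ n) (h2 : n ≤ r + 1) :
    (Z r n).roots = {-(1/(n:ℝ))} := by
  have hn : (n:ℝ) ≠ 0 := by positivity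
  rw [Zsmall r n h1 h2]
  have : C (n:ℝ) * X + 1 = C (n:ℝ) * (X - C (-(1/(n:ℝ)))) := by
    rw [mul_sub, ← Polynomial.C_mul]
    field_simp
    simp
  rw [this, Polynomial.roots_C_mul _ hn, Polynomial.roots_X_sub_C]

lemma neg_prod_sign (s : Multiset ℝ) (h : ∀ a ∈ s, a < 0) :
    0 < s.prod * (-1) ^ (Multiset.card s) := by
  induction s using Multiset.induction_on with
  | empty => simp
  | cons a s ih =>
    have ha : a < 0 := h a (Multiset.mem_cons_self a s)
    have ih' := ih (fun b hb => h b (Multiset.mem_cons_of_mem hb))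
    rw [Multiset.prod_cons, Multiset.card_cons, pow_succ]
    nlinarith

/-- sign of a real polynomial with all-real roots at a non-root point -/
lemma sign_eval_of_roots (p : Polynomial ℝ)
    (hcard : Multiset.card p.roots = p.natDegree)
    (hlc : 0 < p.leadingCoeff) (t : ℝ) (ht : ¬p.IsRoot t) :
    0 < p.eval t * (-1) ^ (Multiset.card (p.roots.filter (t < ·))) := by
  classical
  have hfact := Polynomial.C_leadingCoeff_mul_prod_multiset_X_sub_C hcard
  have heval : p.eval t = p.leadingCoeff * ((p.roots.map (fun a => t - a)).prod) := by
    conv_lhs => rw [← hfact]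
    rw [Polynomial.eval_mul, Polynomial.eval_C, Polynomial.eval_multiset_prod,
      Multiset.map_map]
    simp
  have hsplit := Multiset.filter_add_not (fun a => t < a) p.roots
  set s₁ := p.roots.filter (t < ·) with hs₁
  set s₂ := p.roots.filter (fun a => ¬ t < a) with hs₂
  have hprod : (p.roots.map (fun a => t - a)).prod =
      ((s₁.map (fun a => t - a)).prod) * ((s₂.map (fun a => t - a)).prod) := by
    rw [← Multiset.prod_add, ← Multiset.map_add, hsplit]
  have h2pos : 0 < (s₂.map (fun a => t - a)).prod := by
    apply Multiset.prod_pos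
    intro b hb
    obtain ⟨a, ha, rfl⟩ := Multiset.mem_map.1 hb
    have ha' := Multiset.mem_filter.1 ha
    have hne : a ≠ t := by
      intro h; apply ht
      have := Multiset.mem_of_mem_filter ha
      rw [h] at this
      exact ((Polynomial.mem_roots'.1 this).2)
    have : a < t := lt_of_le_of_ne (not_lt.1 ha'.2) hne
    linarith
  have h1 : 0 < ((s₁.map (fun a => t - a)).prod) * (-1) ^ (Multiset.card s₁) := by
    have := neg_prod_sign (s₁.map (fun a => t - a)) ?_
    · simpa using this
    · intro b hb
      obtain ⟨a, ha, rfl⟩ := Multiset.mem_map.1 hb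
      have := (Multiset.mem_filter.1 ha).2
      linarith
  rw [heval, hprod]
  nlinarith [mul_pos (mul_pos hlc h2pos) h1]

/-- far to the left, the sign of p is (-1)^deg -/
lemma exists_neg_far (p : Polynomial ℝ) (hlc : 0 < p.leadingCoeff) (b : ℝ) :
    ∃ t, t < b ∧ 0 < p.eval t * (-1) ^ p.natDegree := by
  rcases Nat.eq_zero_or_pos p.natDegree with h0 | hd
  · refine ⟨b - 1, by linarith, ?_⟩
    rw [Polynomial.eval_eq_sum_range, h0]
    simpa [h0] using by simpa [Polynomial.leadingCoeff, h0] using hlc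
  · set q := p.comp (-X) with hq
    have hdq : q.natDegree = p.natDegree := by
      rw [hq, Polynomial.natDegree_comp]
      simp
    have hlcq : q.leadingCoeff = p.leadingCoeff * (-1) ^ p.natDegree := by
      rw [hq, Polynomial.leadingCoeff_comp (by simp)]
      simp
    have hdegq : 0 < q.degree := by
      rw [Polynomial.degree_eq_natDegree (fun h => by simp [h] at hdq; omega)]
      exact_mod_cast by omega
    rcases Nat.even_or_odd p.natDegree with he | ho
    · have : Filter.Tendsto (fun x => q.eval x) Filter.atTop Filter.atTop := by
        apply Polynomial.tendsto_atTop_of_leadingCoeff_nonneg _ hdegq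
        rw [hlcq, he.neg_one_pow]
        linarith
      obtain ⟨s, hs1, hs2⟩ := ((this.eventually_gt_atTop 0).and
        (Filter.eventually_gt_atTop (-b))).exists
      refine ⟨-s, by linarith, ?_⟩
      have : q.eval s = p.eval (-s) := by rw [hq, Polynomial.eval_comp]; simp
      rw [he.neg_one_pow]
      rw [this] at hs1
      linarith
    · have : Filter.Tendsto (fun x => q.eval x) Filter.atTop Filter.atBot := by
        apply Polynomial.tendsto_atBot_of_leadingCoeff_nonpos _ hdegq
        rw [hlcq, ho.neg_one_pow]
        linarith
      obtain ⟨s, hs1, hs2⟩ := ((this.eventually_lt_atBot 0).and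
        (Filter.eventually_gt_atTop (-b))).exists
      refine ⟨-s, by linarith, ?_⟩
      have : q.eval s = p.eval (-s) := by rw [hq, Polynomial.eval_comp]; simp
      rw [ho.neg_one_pow]
      rw [this] at hs1
      linarith

lemma exists_root_between (p : Polynomial ℝ) {a b : ℝ} (hab : a < b) (K : ℕ)
    (ha : 0 < p.eval a * (-1) ^ (K+1)) (hb : 0 < p.eval b * (-1) ^ K) :
    ∃ c, a < c ∧ c < b ∧ p.IsRoot c := by
  have hcont : ContinuousOn (fun x => p.eval x) (Set.Icc a b) :=
    (Polynomial.continuous p).continuousOn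
  rcases Nat.even_or_odd K with he | ho
  · have hKa : ((-1:ℝ)) ^ (K+1) = -1 := by rw [pow_succ, he.neg_one_pow]; ring
    have hKb : ((-1:ℝ)) ^ K = 1 := he.neg_one_pow
    rw [hKa] at ha
    rw [hKb] at hb
    have h1 : p.eval a < 0 := by linarith
    have h2 : 0 < p.eval b := by linarith
    have := intermediate_value_Ioo hab.le hcont
    obtain ⟨c, hc, hc0⟩ := this (Set.mem_Ioo.2 ⟨h1, h2⟩)
    exact ⟨c, hc.1, hc.2, hc0⟩
  · have hKa : ((-1:ℝ)) ^ (K+1) = 1 := (ho.add_one).neg_one_pow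
    have hKb : ((-1:ℝ)) ^ K = -1 := ho.neg_one_pow
    rw [hKa] at ha
    rw [hKb] at hb
    have h1 : 0 < p.eval a := by linarith
    have h2 : p.eval b < 0 := by linarith
    have := intermediate_value_Ioo' hab.le hcont
    obtain ⟨c, hc, hc0⟩ := this (Set.mem_Ioo.2 ⟨h2, h1⟩)
    exact ⟨c, hc.1, hc.2, hc0⟩

lemma count_above (x : ℕ → ℝ) (d K : ℕ)
    (hdec : ∀ k l, 1 ≤ k → k < l → l ≤ d → x l < x k)
    (t : ℝ) (hK : K ≤ d) (h1 : 1 ≤ K → t < x K) (h2 : K < d → x (K+1) < t) :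
    Multiset.card (Multiset.filter (fun a => t < a) ((Finset.Icc 1 d).val.map x)) = K := by
  classical
  rw [← Multiset.countP_eq_card_filter, Multiset.countP_map, ← Finset.filter_val,
    ← Finset.card_def]
  have : Finset.filter (fun k => t < x k) (Finset.Icc 1 d) = Finset.Icc 1 K := by
    ext k
    simp only [Finset.mem_filter, Finset.mem_Icc]
    constructor
    · rintro ⟨⟨hk1, hkd⟩, hkt⟩
      refine ⟨hk1, ?_⟩
      by_contra hkK
      push_neg at hkK
      have hKd : K < d := lt_of_lt_of_le hkK hkd
      have hx : x k ≤ x (K+1) := by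
        rcases eq_or_lt_of_le (Nat.succ_le_of_lt hkK) with h | h
        · rw [← h]
        · exact le_of_lt (hdec (K+1) k (by omega) h hkd)
      have := h2 hKd
      linarith
    · rintro ⟨hk1, hkK⟩
      refine ⟨⟨hk1, le_trans hkK hK⟩, ?_⟩
      rcases eq_or_lt_of_le hkK with h | h
      · rw [h]; exact h1 (by omega)
      · have := hdec k K hk1 h hK
        have := h1 (by omega)
        linarith
  rw [this, Nat.card_Icc]
  omega

lemma card_row (d : ℕ) (x : ℕ → ℝ) :
    Multiset.card ((Finset.Icc 1 d).val.map x) = d := by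
  rw [Multiset.card_map, ← Finset.card_def, Nat.card_Icc]
  omega

lemma sign_at (r m : ℕ) (x : ℕ → ℝ)
    (hroots : (Z r m).roots = (Finset.Icc 1 (DD r m)).val.map x)
    (hdec : ∀ k l, 1 ≤ k → k < l → l ≤ DD r m → x l < x k)
    (t : ℝ) (K : ℕ) (hK : K ≤ DD r m)
    (h1 : 1 ≤ K → t < x K) (h2 : K < DD r m → x (K+1) < t) :
    0 < (Z r m).eval t * (-1) ^ K := by
  classical
  set d := DD r m with hd
  have key : ∀ k, 1 ≤ k → k ≤ d → x k ≠ t := by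
    intro k hk1 hkd
    rcases le_or_gt k K with h | h
    · have : t < x k := by
        rcases eq_or_lt_of_le h with h' | h'
        · rw [h']; exact h1 (by omega)
        · have := hdec k K hk1 h' hK
          have := h1 (by omega)
          linarith
      linarith
    · have : x k < t := by
        have hKd : K < d := lt_of_lt_of_le h hkd
        have hx : x k ≤ x (K+1) := by
          rcases eq_or_lt_of_le (Nat.succ_le_of_lt h) with h' | h'
          · rw [← h']
          · exact le_of_lt (hdec (K+1) k (by omega) h' hkd)
        have := h2 hKd
        linarith
      linarith
  have hnroot : ¬ (Z r m).IsRoot t := by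
    intro hroot
    have : t ∈ (Z r m).roots := Polynomial.mem_roots'.2 ⟨Z_ne_zero r m, hroot⟩
    rw [hroots] at this
    obtain ⟨k, hk, hkt⟩ := Multiset.mem_map.1 this
    have hk' := Finset.mem_Icc.1 (by rwa [Finset.mem_val] at hk)
    exact key k hk'.1 hk'.2 hkt
  have hcard : Multiset.card (Z r m).roots = (Z r m).natDegree := by
    rw [hroots, card_row, natDegree_Z]
  have := sign_eval_of_roots (Z r m) hcard (leadingCoeff_Z_pos r m) t hnroot
  rw [hroots] at this
  rwa [count_above x d K hdec t hK h1 h2] at this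

lemma dec_of_adj (f : ℕ → ℝ) (d : ℕ) (h : ∀ k, 1 ≤ k → k + 1 ≤ d → f (k+1) < f k) :
    ∀ k l, 1 ≤ k → k < l → l ≤ d → f l < f k := by
  intro k l hk1 hkl hld
  induction l with
  | zero => omega
  | succ l ih =>
    rcases Nat.lt_or_ge k l with h' | h'
    · exact lt_trans (h l (by omega) (by omega)) (ih h' (by omega))
    · have : k = l := by omega
      subst this
      exact h k hk1 hld

lemma chainM (r n : ℕ) (x : ℕ → ℕ → ℝ)
    (hM : ∀ m, 2 ≤ m → m ≤ n → ∀ k, 1 ≤ k → k ≤ DD r (m-1) → x (m-1) k < x m k) :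
    ∀ a b k, 1 ≤ a → a < b → b ≤ n → 1 ≤ k → k ≤ DD r a → x a k < x b k := by
  intro a b k ha hab hbn hk1 hka
  induction b with
  | zero => omega
  | succ b ih =>
    rcases Nat.lt_or_ge a b with h' | h'
    · have h1 := ih h' (by omega)
      have h2 := hM (b+1) (by omega) hbn k hk1 (by
        simp only [Nat.add_sub_cancel]
        exact le_trans hka (DD_mono r (by omega)))
      simp only [Nat.add_sub_cancel] at h2
      linarith
    · have : a = b := by omega
      subst this
      have h2 := hM (a+1) (by omega) hbn k hk1 (by simp only [Nat.add_sub_cancel]; exact hka)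
      simpa using h2

lemma master (r : ℕ) (hr : 1 ≤ r) (n : ℕ) (hn : 1 ≤ n) :
    ∃ x : ℕ → ℕ → ℝ,
      (∀ m, 1 ≤ m → m ≤ n →
        (∀ k, 1 ≤ k → k ≤ DD r m → x m k < 0) ∧
        (∀ k l, 1 ≤ k → k < l → l ≤ DD r m → x m l < x m k) ∧
        ((Z r m).roots = (Finset.Icc 1 (DD r m)).val.map (x m))) ∧
      (∀ m, 2 ≤ m → m ≤ n → ∀ k, 1 ≤ k → k ≤ DD r (m-1) → x (m-1) k < x m k) ∧
      (∀ m, r+1 ≤ m → m ≤ n → ∀ k, 2 ≤ k → k ≤ DD r m → x m k < x (m-r) (k-1)) := by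
  induction n, hn using Nat.le_induction with
  | base =>
    refine ⟨fun m k => -(1/(m:ℝ)), ?_, ?_, ?_⟩
    · intro m h1 h2
      have hm : m = 1 := by omega
      subst hm
      have hD : DD r 1 = 1 := DD_small r 1 le_rfl (by omega)
      refine ⟨fun k _ _ => by norm_num, fun k l hk hkl hl => by omega, ?_⟩
      rw [hD, Zsmall_roots r 1 le_rfl (by omega)]
      simp
    · intro m h1 h2; omega
    · intro m h1 h2; omega
  | succ n hn ih =>
    obtain ⟨x, hRow, hM, hB⟩ := ih
    rcases le_or_gt (n+1) (r+1) with hsmall | hbig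
    · -- small case : Z (n+1) = 1 + (n+1) y
      set x' : ℕ → ℕ → ℝ := fun m k => if m = n+1 then -(1/((n:ℝ)+1)) else x m k with hx'
      have hx'old : ∀ m, m ≤ n → x' m = x m := by
        intro m hm; funext k; simp only [hx', if_neg (by omega : ¬ m = n+1)]
      have hx'new : x' (n+1) = fun _ => -(1/((n:ℝ)+1)) := by
        funext k; simp [hx']
      have hDn1 : DD r (n+1) = 1 := DD_small r (n+1) (by omega) hsmall
      refine ⟨x', ?_, ?_, ?_⟩
      · intro m h1 h2
        rcases Nat.lt_or_ge m (n+1) with hm | hm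
        · rw [hx'old m (by omega)]; exact hRow m h1 (by omega)
        · have hm' : m = n+1 := by omega
          subst hm'
          rw [hx'new, hDn1]
          refine ⟨fun k _ _ => by
            have h0 : (0:ℝ) < (n:ℝ)+1 := by positivity
            have := one_div_pos.2 h0
            linarith, fun k l hk hkl hl => by omega, ?_⟩
          rw [Zsmall_roots r (n+1) (by omega) hsmall]
          push_cast
          simp
      · intro m h1 h2 k hk1 hk2
        rcases Nat.lt_or_ge m (n+1) with hm | hm
        · rw [hx'old m (by omega), hx'old (m-1) (by omega)]
          exact hM m h1 (by omega) k hk1 hk2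
        · have hm' : m = n+1 := by omega
          subst hm'
          simp only [Nat.add_sub_cancel] at hk2 ⊢
          rw [hx'old n (by omega), hx'new]
          have hDn : DD r n = 1 := DD_small r n (by omega) (by omega)
          have hk : k = 1 := by omega
          subst hk
          -- x n 1 = -(1/n)
          have hmem : x n 1 ∈ (Z r n).roots := by
            rw [(hRow n (by omega) le_rfl).2.2]
            exact Multiset.mem_map_of_mem _ (by
              rw [Finset.mem_val, Finset.mem_Icc]; omega)
          rw [Zsmall_roots r n (by omega) (by omega)] at hmem
          rw [Multiset.mem_singleton] at hmem
          rw [hmem]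
          have h0 : (0:ℝ) < n := by exact_mod_cast hn
          rw [neg_lt_neg_iff, div_lt_div_iff₀ (by linarith) h0]
          linarith
      · intro m h1 h2 k hk1 hk2
        rcases Nat.lt_or_ge m (n+1) with hm | hm
        · rw [hx'old m (by omega), hx'old (m-r) (by omega)]
          exact hB m h1 (by omega) k hk1 hk2
        · have hm' : m = n+1 := by omega
          subst hm'
          rw [hDn1] at hk2
          omega
    · -- big case : n ≥ r + 1
      have hn1 : r + 1 ≤ n := by omega
      set d := DD r (n+1) with hd
      set d1 := DD r n with hd1
      set d2 := DD r (n-r) with hd2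
      have hdd2 : d = d2 + 1 := by
        rw [hd, hd2, show n+1 = (n-r)+(r+1) by omega, DD_shift]
      have hd21 : d2 ≤ d1 := DD_mono r (by omega)
      have hd1d : d1 ≤ d := DD_mono r (by omega)
      have h1d2 : 1 ≤ d2 := DD_pos r (n-r) (by omega)
      have hrec : Z r (n+1) = Z r n + X * Z r (n-r) := by
        rw [show n+1 = (n-r)+(r+1) by omega, Zrec, show (n-r)+r = n by omega]
      obtain ⟨hneg1, hdec1, hroots1⟩ := hRow n (by omega) le_rfl
      obtain ⟨hneg2, hdec2, hroots2⟩ := hRow (n-r) (by omega) (by omega)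
      have rootp : ∀ k, 1 ≤ k → k ≤ d1 → (Z r n).IsRoot (x n k) := by
        intro k h1 h2
        have hmem : x n k ∈ (Z r n).roots := by
          rw [hroots1]
          exact Multiset.mem_map_of_mem _ (by rw [Finset.mem_val, Finset.mem_Icc]; omega)
        exact (Polynomial.mem_roots'.1 hmem).2
      have rootq : ∀ k, 1 ≤ k → k ≤ d2 → (Z r (n-r)).IsRoot (x (n-r) k) := by
        intro k h1 h2
        have hmem : x (n-r) k ∈ (Z r (n-r)).roots := by
          rw [hroots2]
          exact Multiset.mem_map_of_mem _ (by rw [Finset.mem_val, Finset.mem_Icc]; omega)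
        exact (Polynomial.mem_roots'.1 hmem).2
      have chain : ∀ k, 1 ≤ k → k ≤ d2 → x (n-r) k < x n k := by
        intro k h1 h2
        exact chainM r n x hM (n-r) n k (by omega) (by omega) le_rfl h1 h2
      have sp : ∀ k, 1 ≤ k → k ≤ d1 → 0 < (Z r (n+1)).eval (x n k) * (-1)^k := by
        intro k h1 h2
        have hev : (Z r (n+1)).eval (x n k) = x n k * (Z r (n-r)).eval (x n k) := by
          rw [hrec, Polynomial.eval_add, Polynomial.eval_mul, Polynomial.eval_X,
            rootp k h1 h2]
          ring
        have hs := sign_at r (n-r) (x (n-r)) hroots2 hdec2 (x n k) (k-1)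
          (by omega)
          (fun hk' => hB n hn1 le_rfl k (by omega) h2)
          (fun hk' => by
            rw [show k - 1 + 1 = k by omega]
            exact chain k h1 (by omega))
        have hps : ((-1:ℝ))^k = (-1)^(k-1) * (-1) := by
          rw [← pow_succ, show k-1+1 = k by omega]
        have hneg := hneg1 k h1 h2
        rw [hev, hps]
        nlinarith [hs, hneg, mul_pos (neg_pos.2 hneg) hs]
      have sq : ∀ k, 1 ≤ k → k ≤ d2 → 0 < (Z r (n+1)).eval (x (n-r) k) * (-1)^k := by
        intro k h1 h2
        have hev : (Z r (n+1)).eval (x (n-r) k) = (Z r n).eval (x (n-r) k) := by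
          rw [hrec, Polynomial.eval_add, Polynomial.eval_mul, Polynomial.eval_X,
            rootq k h1 h2]
          ring
        rw [hev]
        exact sign_at r n (x n) hroots1 hdec1 (x (n-r) k) k (by omega)
          (fun _ => chain k h1 h2)
          (fun hk' => by
            have := hB n hn1 le_rfl (k+1) (by omega) (by omega)
            simpa using this)
      set u : ℕ → ℝ := fun k => if k = 1 then 0 else x (n-r) (k-1) with hu
      have hu_sign : ∀ k, 1 ≤ k → k ≤ d → 0 < (Z r (n+1)).eval (u k) * (-1)^(k-1) := by
        intro k h1 h2
        rcases eq_or_lt_of_le h1 with h | h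
        · have hue : u k = 0 := by rw [hu]; simp [← h]
          rw [hue, Z_eval_zero, ← h]
          norm_num
        · have hue : u k = x (n-r) (k-1) := by rw [hu]; simp [show ¬ k = 1 by omega]
          rw [hue]
          exact sq (k-1) (by omega) (by omega)
      have hu_neg : ∀ k, 1 ≤ k → k ≤ d → u k ≤ 0 := by
        intro k h1 h2
        rcases eq_or_lt_of_le h1 with h | h
        · have hue : u k = 0 := by rw [hu]; simp [← h]
          rw [hue]
        · have hue : u k = x (n-r) (k-1) := by rw [hu]; simp [show ¬ k = 1 by omega]
          rw [hue]
          exact le_of_lt (hneg2 (k-1) (by omega) (by omega))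
      have hroot_ex : ∀ k, ∃ c, 1 ≤ k → k ≤ d →
          c < u k ∧ (Z r (n+1)).IsRoot c ∧ (k ≤ d1 → x n k < c) := by
        intro k
        by_cases hk : 1 ≤ k ∧ k ≤ d
        · obtain ⟨hk1, hkd⟩ := hk
          rcases le_or_gt k d1 with hkd1 | hkd1
          · have hlu : x n k < u k := by
              rcases eq_or_lt_of_le hk1 with h | h
              · have hue : u k = 0 := by rw [hu]; simp [← h]
                rw [hue, ← h]
                exact hneg1 1 le_rfl (by omega)
              · have hue : u k = x (n-r) (k-1) := by rw [hu]; simp [show ¬ k = 1 by omega]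
                rw [hue]
                exact hB n hn1 le_rfl k (by omega) hkd1
            obtain ⟨c, hc1, hc2, hc3⟩ := exists_root_between (Z r (n+1)) hlu (k-1)
              (by rw [show k - 1 + 1 = k by omega]; exact sp k hk1 hkd1)
              (hu_sign k hk1 hkd)
            exact ⟨c, fun _ _ => ⟨hc2, hc3, fun _ => hc1⟩⟩
          · -- k = d, d1 = d - 1
            obtain ⟨t, ht1, ht2⟩ := exists_neg_far (Z r (n+1)) (leadingCoeff_Z_pos r (n+1)) (u k)
            rw [natDegree_Z] at ht2
            have hkd' : k = d := by omega
            obtain ⟨c, hc1, hc2, hc3⟩ := exists_root_between (Z r (n+1)) ht1 (k-1)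
              (by rw [show k - 1 + 1 = k by omega, hkd']; exact ht2)
              (hu_sign k hk1 hkd)
            exact ⟨c, fun _ _ => ⟨hc2, hc3, fun h => by omega⟩⟩
        · exact ⟨0, fun h1 h2 => absurd ⟨h1, h2⟩ hk⟩
      choose y hy using hroot_ex
      have hy1 : ∀ k, 1 ≤ k → k ≤ d → y k < u k := fun k h1 h2 => (hy k h1 h2).1
      have hy2 : ∀ k, 1 ≤ k → k ≤ d → (Z r (n+1)).IsRoot (y k) := fun k h1 h2 => (hy k h1 h2).2.1
      have hy3 : ∀ k, 1 ≤ k → k ≤ d → k ≤ d1 → x n k < y k := fun k h1 h2 h3 => (hy k h1 h2).2.2 h3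
      have hyneg : ∀ k, 1 ≤ k → k ≤ d → y k < 0 :=
        fun k h1 h2 => lt_of_lt_of_le (hy1 k h1 h2) (hu_neg k h1 h2)
      have hadj : ∀ k, 1 ≤ k → k + 1 ≤ d → y (k+1) < y k := by
        intro k h1 h2
        have ha : y (k+1) < x (n-r) k := by
          have hue : u (k+1) = x (n-r) k := by
            rw [hu]; simp [show ¬ k + 1 = 1 by omega, show k ≠ 0 by omega]
          have := hy1 (k+1) (by omega) h2
          rwa [hue] at this
        have hb' : x (n-r) k < x n k := chain k h1 (by omega)
        have hc' : x n k < y k := hy3 k h1 (by omega) (by omega)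
        linarith
      have hdecy := dec_of_adj y d hadj
      have hrootsy : (Z r (n+1)).roots = (Finset.Icc 1 d).val.map y := by
        classical
        have hnodup : ((Finset.Icc 1 d).val.map y).Nodup := by
          refine Multiset.Nodup.map_on ?_ (Finset.Icc 1 d).nodup
          intro a ha b hb hab
          rw [Finset.mem_val, Finset.mem_Icc] at ha hb
          by_contra hne
          rcases Nat.lt_or_ge a b with h | h
          · have := hdecy a b ha.1 h hb.2; linarith [hab ▸ this]
          · have h' : b < a := by omega
            have := hdecy b a hb.1 h' ha.2; linarith [hab ▸ this]
        have hle : (Finset.Icc 1 d).val.map y ≤ (Z r (n+1)).roots := by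
          rw [Multiset.le_iff_count]
          intro a
          by_cases hmem : a ∈ (Finset.Icc 1 d).val.map y
          · rw [Multiset.count_eq_one_of_mem hnodup hmem]
            rw [Nat.succ_le_iff, Multiset.count_pos]
            obtain ⟨k, hk, rfl⟩ := Multiset.mem_map.1 hmem
            rw [Finset.mem_val, Finset.mem_Icc] at hk
            exact Polynomial.mem_roots'.2 ⟨Z_ne_zero _ _, hy2 k hk.1 hk.2⟩
          · rw [Multiset.count_eq_zero_of_notMem hmem]
            omega
        have hcle : Multiset.card (Z r (n+1)).roots ≤
            Multiset.card ((Finset.Icc 1 d).val.map y) := by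
          rw [card_row]
          calc Multiset.card (Z r (n+1)).roots ≤ (Z r (n+1)).natDegree :=
                Polynomial.card_roots' _
            _ = d := natDegree_Z r (n+1)
        exact (Multiset.eq_of_le_of_card_le hle hcle).symm
      -- assemble
      set x' : ℕ → ℕ → ℝ := fun m k => if m = n+1 then y k else x m k with hx'
      have hx'old : ∀ m, m ≤ n → x' m = x m := by
        intro m hm; funext k; simp only [hx', if_neg (by omega : ¬ m = n+1)]
      have hx'new : x' (n+1) = y := by funext k; simp [hx']
      refine ⟨x', ?_, ?_, ?_⟩
      · intro m h1 h2
        rcases Nat.lt_or_ge m (n+1) with hm | hm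
        · rw [hx'old m (by omega)]; exact hRow m h1 (by omega)
        · have hm' : m = n+1 := by omega
          subst hm'
          rw [hx'new]
          exact ⟨hyneg, hdecy, hrootsy⟩
      · intro m h1 h2 k hk1 hk2
        rcases Nat.lt_or_ge m (n+1) with hm | hm
        · rw [hx'old m (by omega), hx'old (m-1) (by omega)]
          exact hM m h1 (by omega) k hk1 hk2
        · have hm' : m = n+1 := by omega
          subst hm'
          simp only [Nat.add_sub_cancel] at hk2 ⊢
          rw [hx'old n (by omega), hx'new]
          exact hy3 k hk1 (by omega) hk2
      · intro m h1 h2 k hk1 hk2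
        rcases Nat.lt_or_ge m (n+1) with hm | hm
        · rw [hx'old m (by omega), hx'old (m-r) (by omega)]
          exact hB m h1 (by omega) k hk1 hk2
        · have hm' : m = n+1 := by omega
          subst hm'
          rw [hx'new, hx'old (n+1-r) (by omega)]
          have ha : y k < x (n-r) (k-1) := by
            have hue : u k = x (n-r) (k-1) := by
              rw [hu]; simp [show ¬ k = 1 by omega]
            have := hy1 k (by omega) hk2
            rwa [hue] at this
          have hbb : x (n-r) (k-1) < x (n+1-r) (k-1) := by
            have := hM (n-r+1) (by omega) (by omega) (k-1) (by omega)
              (by simp only [Nat.add_sub_cancel]; omega)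
            simp only [Nat.add_sub_cancel] at this
            rw [show n+1-r = n-r+1 by omega]
            exact this
          linarith

theorem Z_roots_simple (r i j : ℕ) (hr : 1 ≤ r) (hj1 : 1 ≤ j) (hj2 : j ≤ r + 1) :
    ∃ S : Finset ℝ, S.card = i + 1 ∧ (∀ y ∈ S, y < 0) ∧
      (∀ y : ℝ, (Z r ((r + 1) * i + j)).IsRoot y ↔ y ∈ S) ∧
      (∀ y ∈ S, (Z r ((r + 1) * i + j)).rootMultiplicity y = 1) := by
  classical
  set n := (r + 1) * i + j with hn
  have hn1 : 1 ≤ n := by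
    have : 0 ≤ (r+1)*i := Nat.zero_le _
    omega
  have hDD : DD r n = i + 1 := by
    have h2 : (j + r) / (r + 1) = 1 := Nat.div_eq_of_lt_le (by omega) (by omega)
    unfold DD
    rw [hn, add_assoc, Nat.mul_add_div (by omega), h2]
  obtain ⟨x, hRow, _, _⟩ := master r hr n hn1
  obtain ⟨hneg, hdec, hroots⟩ := hRow n hn1 le_rfl
  rw [hDD] at hneg hdec hroots
  set S := Finset.image (fun k => x n k) (Finset.Icc 1 (i+1)) with hS
  have hinj : Set.InjOn (fun k => x n k) (Finset.Icc 1 (i+1)) := by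
    intro a ha b hb hab
    simp only [Finset.coe_Icc, Set.mem_Icc] at ha hb
    by_contra hne
    rcases Nat.lt_or_ge a b with h | h
    · have := hdec a b ha.1 h hb.2; simp only at hab; linarith [hab ▸ this]
    · have h' : b < a := by omega
      have := hdec b a hb.1 h' ha.2; simp only at hab; linarith [hab ▸ this]
  have hmemS : ∀ y, y ∈ S ↔ ∃ k, 1 ≤ k ∧ k ≤ i+1 ∧ x n k = y := by
    intro y
    rw [hS, Finset.mem_image]
    constructor
    · rintro ⟨k, hk, rfl⟩
      rw [Finset.mem_Icc] at hk
      exact ⟨k, hk.1, hk.2, rfl⟩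
    · rintro ⟨k, h1, h2, rfl⟩
      exact ⟨k, Finset.mem_Icc.2 ⟨h1, h2⟩, rfl⟩
  refine ⟨S, ?_, ?_, ?_, ?_⟩
  · rw [hS, Finset.card_image_of_injOn hinj, Nat.card_Icc]
    omega
  · intro y hy
    obtain ⟨k, h1, h2, rfl⟩ := (hmemS y).1 hy
    exact hneg k h1 h2
  · intro y
    constructor
    · intro hy
      have : y ∈ (Z r n).roots := Polynomial.mem_roots'.2 ⟨Z_ne_zero r n, hy⟩
      rw [hroots] at this
      obtain ⟨k, hk, rfl⟩ := Multiset.mem_map.1 this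
      rw [Finset.mem_val, Finset.mem_Icc] at hk
      exact (hmemS _).2 ⟨k, hk.1, hk.2, rfl⟩
    · intro hy
      obtain ⟨k, h1, h2, rfl⟩ := (hmemS y).1 hy
      have : x n k ∈ (Z r n).roots := by
        rw [hroots]
        exact Multiset.mem_map_of_mem _ (by rw [Finset.mem_val, Finset.mem_Icc]; omega)
      exact (Polynomial.mem_roots'.1 this).2
  · intro y hy
    obtain ⟨k₀, h1, h2, rfl⟩ := (hmemS y).1 hy
    rw [← Polynomial.count_roots, hroots, Multiset.count_map, ← Finset.filter_val,
      ← Finset.card_def]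
    have : Finset.filter (fun a => x n k₀ = x n a) (Finset.Icc 1 (i+1)) = {k₀} := by
      ext a
      simp only [Finset.mem_filter, Finset.mem_Icc, Finset.mem_singleton]
      constructor
      · rintro ⟨⟨ha1, ha2⟩, hax⟩
        exact (hinj (by simp only [Finset.coe_Icc, Set.mem_Icc]; omega)
          (by simp only [Finset.coe_Icc, Set.mem_Icc]; omega) hax.symm)
      · rintro rfl
        exact ⟨⟨h1, h2⟩, rfl⟩
    rw [this, Finset.card_singleton]
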